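/- Under the bijection between quasi-Yamanouchi tableaux QYT_{≤m}(λ) (m ≥ n−(λ₁−1)) and standard Young tableaux SYT(λ), a quasi-Yamanouchi tableau with maximum entry exactly k corresponds to a standard Young tableau with exactly k−1 descents. -/

import Mathlib

open YoungDiagram

/-- Entries of `T` are all `< m`.  Entries are 0-based: the value `v` represents the
positive integer `v + 1`, so this says all (1-based) entries are at most `m`. -/
def EntryLE (μ : YoungDiagram) (T : SemistandardYoungTableau μ) (m : ℕ) : Prop :=
  ∀ i j : ℕ, (i, j) ∈ μ → T i j < m

/-- `T` is quasi-Yamanouchi: whenever a value `v > 0` appears, the leftmost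
occurrence of `v` is weakly left of some occurrence of `v - 1`; equivalently some
occurrence of `v` is weakly left of some occurrence of `v - 1`. -/
def IsQY (μ : YoungDiagram) (T : SemistandardYoungTableau μ) : Prop :=
  ∀ v : ℕ, 0 < v → (∃ i j : ℕ, (i, j) ∈ μ ∧ T i j = v) →
    ∃ i j i' j' : ℕ, (i, j) ∈ μ ∧ (i', j') ∈ μ ∧ T i j = v ∧ T i' j' = v - 1 ∧ j ≤ j'

/-- The maximum (1-based) entry of `T` is exactly `m`: all entries are `< m`
(0-based) and the value `m - 1` appears. -/
def MaxEq (μ : YoungDiagram) (T : SemistandardYoungTableau μ) (m : ℕ) : Prop :=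
  EntryLE μ T m ∧ ∃ i j : ℕ, (i, j) ∈ μ ∧ T i j = m - 1

/-- The number of quasi-Yamanouchi tableaux of shape `μ` with maximum entry exactly `m`. -/
noncomputable def QYTeq (μ : YoungDiagram) (m : ℕ) : ℕ :=
  Nat.card {T : SemistandardYoungTableau μ // IsQY μ T ∧ MaxEq μ T m}

/-- The number of semistandard Young tableaux of shape `μ` with entries at most `m`. -/
noncomputable def SSYTle (μ : YoungDiagram) (m : ℕ) : ℕ :=
  Nat.card {T : SemistandardYoungTableau μ // EntryLE μ T m}

/-- `T` is a standard Young tableau: each of the values `0, …, μ.card - 1`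
(representing `1, …, n`) appears exactly once. -/
def IsSYT (μ : YoungDiagram) (T : SemistandardYoungTableau μ) : Prop :=
  ∀ v : ℕ, v < μ.card → ∃! p : ℕ × ℕ, p ∈ μ ∧ T p.1 p.2 = v

/-- The number of standard Young tableaux of shape `μ`. -/
noncomputable def SYTcount (μ : YoungDiagram) : ℕ :=
  Nat.card {T : SemistandardYoungTableau μ // IsSYT μ T}

/-- The descent set of a standard tableau, in the paper's 1-based labelling:
`d ∈ Des T` iff `1 ≤ d ≤ n - 1` and the (1-based) entry `d + 1` (0-based value `d`)
appears weakly left of the (1-based) entry `d` (0-based value `d - 1`). -/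
def Des (μ : YoungDiagram) (T : SemistandardYoungTableau μ) : Set ℕ :=
  {d | 1 ≤ d ∧ d ≤ μ.card - 1 ∧
    ∃ i j i' j' : ℕ, (i, j) ∈ μ ∧ (i', j') ∈ μ ∧ T i j = d ∧ T i' j' = d - 1 ∧ j ≤ j'}

/-- One destandardization step at value `v`: every occurrence of `v` lies strictly
right of every occurrence of `v - 1` (in particular vacuously if no `v - 1` appears),
and `T'` is obtained from `T` by decrementing every entry equal to `v` to `v - 1`. -/
def StepAt (μ : YoungDiagram) (T T' : SemistandardYoungTableau μ) (v : ℕ) : Prop :=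
  0 < v ∧ (∃ i j : ℕ, (i, j) ∈ μ ∧ T i j = v) ∧
    (∀ i j i' j' : ℕ, (i, j) ∈ μ → (i', j') ∈ μ → T i j = v → T i' j' = v - 1 → j' < j) ∧
    (∀ i j : ℕ, (i, j) ∈ μ → T' i j = if T i j = v then v - 1 else T i j)

/-- One destandardization step (at some value). -/
def Step (μ : YoungDiagram) (T T' : SemistandardYoungTableau μ) : Prop :=
  ∃ v : ℕ, StepAt μ T T' v

/-- `Q` is the destandardization of `T`: it is reachable from `T` by destandardization
steps and no further step applies to it. -/
def IsDst (μ : YoungDiagram) (T Q : SemistandardYoungTableau μ) : Prop :=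
  Relation.ReflTransGen (Step μ) T Q ∧ ∀ Q' : SemistandardYoungTableau μ, ¬ Step μ Q Q'

/-- The hook length of the box in row `i`, column `j` of `μ`. -/
def hookLength (μ : YoungDiagram) (i j : ℕ) : ℕ :=
  (μ.rowLen i - j) + (μ.colLen j - i) - 1

/-- The hook-content product `∏_{u ∈ μ} (k + c(u)) / h(u)` where `c(u)` is the
content (column minus row) and `h(u)` the hook length. -/
noncomputable def hookContent (μ : YoungDiagram) (k : ℕ) : ℚ :=
  ∏ c ∈ μ.cells, ((k : ℚ) + (c.2 : ℚ) - (c.1 : ℚ)) / (hookLength μ c.1 c.2 : ℚ)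

/-- `μ` is the partition `(l1, l2, 2^{h2-2}, 1^{h1-h2})`: first row `l1`, second row
`l2`, rows `2, …, h2 - 1` of length `2`, rows `h2, …, h1 - 1` of length `1`, and no
other rows; so the first column has height `h1` and the second column height `h2`. -/
def HasRows2 (μ : YoungDiagram) (l1 l2 h1 h2 : ℕ) : Prop :=
  μ.rowLen 0 = l1 ∧ μ.rowLen 1 = l2 ∧
    (∀ i : ℕ, 2 ≤ i → i < h2 → μ.rowLen i = 2) ∧
    (∀ i : ℕ, h2 ≤ i → i < h1 → μ.rowLen i = 1) ∧
    (∀ i : ℕ, h1 ≤ i → μ.rowLen i = 0)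


/-- The lexicographic (value, column) comparison of two cells. -/
def QRel (μ : YoungDiagram) (R : SemistandardYoungTableau μ) (p q : ℕ × ℕ) : Prop :=
  R p.1 p.2 < R q.1 q.2 ∨ (R p.1 p.2 = R q.1 q.2 ∧ p.2 < q.2)

lemma stepAt_qrel {μ : YoungDiagram} {R R' : SemistandardYoungTableau μ} {v : ℕ}
    (h : StepAt μ R R' v) {p q : ℕ × ℕ} (hp : p ∈ μ) (hq : q ∈ μ) :
    QRel μ R p q ↔ QRel μ R' p q := by
  obtain ⟨hv, -, hstrict, heq⟩ := h
  have hp' := heq p.1 p.2 hp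
  have hq' := heq q.1 q.2 hq
  have h1 : R p.1 p.2 = v → R q.1 q.2 = v - 1 → q.2 < p.2 :=
    fun a b => hstrict p.1 p.2 q.1 q.2 hp hq a b
  have h2 : R q.1 q.2 = v → R p.1 p.2 = v - 1 → p.2 < q.2 :=
    fun a b => hstrict q.1 q.2 p.1 p.2 hq hp a b
  simp only [QRel, hp', hq']
  split_ifs <;> omega

lemma dst_qrel {μ : YoungDiagram} {T Q : SemistandardYoungTableau μ}
    (h : Relation.ReflTransGen (Step μ) T Q) {p q : ℕ × ℕ} (hp : p ∈ μ) (hq : q ∈ μ) :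
    QRel μ T p q ↔ QRel μ Q p q := by
  induction h with
  | refl => exact Iff.rfl
  | tail _ h2 ih => exact ih.trans (let ⟨v, hv⟩ := h2; stepAt_qrel hv hp hq)

lemma syt_lt_card {μ : YoungDiagram} {T : SemistandardYoungTableau μ} (hT : IsSYT μ T) :
    ∀ i j : ℕ, (i, j) ∈ μ → T i j < μ.card := by
  classical
  have hex : ∀ d, ∃ p : ℕ × ℕ, d < μ.card → p ∈ μ ∧ T p.1 p.2 = d := by
    intro d
    by_cases h : d < μ.card
    · exact ⟨(hT d h).choose, fun _ => (hT d h).choose_spec.1⟩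
    · exact ⟨(0, 0), fun h' => absurd h' h⟩
  choose f hf using hex
  have hinj : Set.InjOn f (Finset.range μ.card) := by
    intro a ha b hb hab
    simp only [Finset.coe_range, Set.mem_Iio] at ha hb
    have := (hf a ha).2
    rw [hab, (hf b hb).2] at this
    omega
  have hsub : (Finset.range μ.card).image f ⊆ μ.cells := by
    intro p hp
    simp only [Finset.mem_image, Finset.mem_range] at hp
    obtain ⟨a, ha, rfl⟩ := hp
    exact (mem_cells _).2 (hf a ha).1
  have hcard : ((Finset.range μ.card).image f).card = μ.cells.card := by
    rw [Finset.card_image_of_injOn (by simpa using hinj), Finset.card_range]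
  have heq : (Finset.range μ.card).image f = μ.cells :=
    Finset.eq_of_subset_of_card_le hsub (le_of_eq hcard.symm)
  intro i j hij
  have : (i, j) ∈ (Finset.range μ.card).image f := heq ▸ (mem_cells _).2 hij
  simp only [Finset.mem_image, Finset.mem_range] at this
  obtain ⟨a, ha, hfa⟩ := this
  have := (hf a ha).2
  rw [hfa] at this
  rw [this]; exact ha

lemma syt_inj {μ : YoungDiagram} {T : SemistandardYoungTableau μ} (hT : IsSYT μ T)
    {p q : ℕ × ℕ} (hp : p ∈ μ) (hq : q ∈ μ) (h : T p.1 p.2 = T q.1 q.2) : p = q := by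
  have h1 := syt_lt_card hT p.1 p.2 (by rwa [Prod.mk.eta])
  obtain ⟨r, -, hun⟩ := hT (T p.1 p.2) h1
  rw [hun p ⟨hp, rfl⟩, hun q ⟨hq, h.symm⟩]

lemma qy_of_nostep {μ : YoungDiagram} {Q : SemistandardYoungTableau μ}
    (hns : ∀ Q' : SemistandardYoungTableau μ, ¬ Step μ Q Q') {v : ℕ} (hv : 0 < v)
    (hex : ∃ i j : ℕ, (i, j) ∈ μ ∧ Q i j = v) :
    ∃ i j i' j' : ℕ, (i, j) ∈ μ ∧ (i', j') ∈ μ ∧ Q i j = v ∧ Q i' j' = v - 1 ∧ j ≤ j' := by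
  classical
  by_contra hcon
  push_neg at hcon
  have H : ∀ i j i' j' : ℕ, (i, j) ∈ μ → (i', j') ∈ μ → Q i j = v → Q i' j' = v - 1 → j' < j :=
    fun i j i' j' a b c d => hcon i j i' j' a b c d
  set Q' : SemistandardYoungTableau μ :=
    { entry := fun i j => if Q i j = v ∧ (i, j) ∈ μ then v - 1 else Q i j
      row_weak' := by
        intro i j1 j2 hj hcell2
        have hcell1 : (i, j1) ∈ μ := μ.up_left_mem le_rfl (le_of_lt hj) hcell2
        have base : Q i j1 ≤ Q i j2 := Q.row_weak hj hcell2
        rw [if_congr (and_iff_left hcell1) rfl rfl, if_congr (and_iff_left hcell2) rfl rfl]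
        split_ifs <;> omega
      col_strict' := by
        intro i1 i2 j hi hcell2
        have hcell1 : (i1, j) ∈ μ := μ.up_left_mem (le_of_lt hi) le_rfl hcell2
        have base : Q i1 j < Q i2 j := Q.col_strict hi hcell2
        have hx : Q i2 j = v → Q i1 j = v - 1 → False :=
          fun a b => absurd (H i2 j i1 j hcell2 hcell1 a b) (lt_irrefl j)
        rw [if_congr (and_iff_left hcell1) rfl rfl, if_congr (and_iff_left hcell2) rfl rfl]
        split_ifs with a b b
        · rw [a, b] at base; exact absurd base (lt_irrefl v)
        · rw [a] at base; exact lt_of_le_of_lt (Nat.sub_le v 1) base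
        · rw [b] at base
          rcases Nat.lt_or_ge (Q i1 j) (v - 1) with h | h
          · exact h
          · exact absurd (Nat.le_antisymm (by omega) h) (fun e => hx b e)
        · exact base
      zeros' := by
        intro i j hij
        rw [if_neg (fun h => hij h.2)]
        exact Q.zeros hij } with hQ'
  refine hns Q' ⟨v, hv, hex, H, ?_⟩
  intro i j hij
  show (if Q i j = v ∧ (i, j) ∈ μ then v - 1 else Q i j) = _
  rw [if_congr (and_iff_left hij) rfl rfl]

/-- Under the bijection between `QYT_{≤m}(λ)` and `SYT(λ)` (given by
destandardization / restandardization), a quasi-Yamanouchi tableau `Q` with maximum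
entry exactly `k` corresponds to a standard Young tableau `T` with exactly `k - 1`
descents. -/
theorem qyt_max_entry_eq_descents_add_one (μ : YoungDiagram)
    (T Q : SemistandardYoungTableau μ) (hT : IsSYT μ T) (hdst : IsDst μ T Q)
    (k : ℕ) (hk : MaxEq μ Q k) : (Des μ T).ncard = k - 1 := by
  classical
  obtain ⟨hsteps, hnostep⟩ := hdst
  obtain ⟨hQlt, pi, pj, hpm, hpv⟩ := hk
  have hk1 : 1 ≤ k := lt_of_le_of_lt (Nat.zero_le _) (hQlt pi pj hpm)
  -- order invariance
  have key : ∀ p q : ℕ × ℕ, p ∈ μ → q ∈ μ →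
      ((T p.1 p.2 < T q.1 q.2 ∨ (T p.1 p.2 = T q.1 q.2 ∧ p.2 < q.2)) ↔
       (Q p.1 p.2 < Q q.1 q.2 ∨ (Q p.1 p.2 = Q q.1 q.2 ∧ p.2 < q.2))) :=
    fun p q hp hq => dst_qrel hsteps hp hq
  have QT : ∀ i j i' j' : ℕ, (i, j) ∈ μ → (i', j') ∈ μ → T i j < T i' j' →
      (Q i j < Q i' j' ∨ (Q i j = Q i' j' ∧ j < j')) :=
    fun i j i' j' hp hq h => (key (i, j) (i', j') hp hq).mp (Or.inl h)
  have QT2 : ∀ i j i' j' : ℕ, (i, j) ∈ μ → (i', j') ∈ μ → T i j < T i' j' →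
      Q i j ≤ Q i' j' := by
    intro i j i' j' hp hq h
    rcases QT i j i' j' hp hq h with h' | ⟨h', -⟩ <;> omega
  have TQ : ∀ i j i' j' : ℕ, (i, j) ∈ μ → (i', j') ∈ μ → Q i j < Q i' j' →
      T i j < T i' j' := by
    intro i j i' j' hp hq h
    rcases (key (i, j) (i', j') hp hq).mpr (Or.inl h) with h' | ⟨h1, -⟩
    · exact h'
    · have := syt_inj hT hp hq h1
      rw [Prod.mk.injEq] at this
      rw [this.1, this.2] at h
      exact absurd h (lt_irrefl _)
  have colQ : ∀ i j i' j' : ℕ, (i, j) ∈ μ → (i', j') ∈ μ → Q i j = Q i' j' →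
      T i j < T i' j' → j < j' := by
    intro i j i' j' hp hq he h
    rcases QT i j i' j' hp hq h with h' | ⟨-, h'⟩
    · omega
    · exact h'
  -- value-cell chooser for T
  have hex : ∀ d, ∃ p : ℕ × ℕ, d < μ.card → p ∈ μ ∧ T p.1 p.2 = d := by
    intro d
    by_cases h : d < μ.card
    · exact ⟨(hT d h).choose, fun _ => (hT d h).choose_spec.1⟩
    · exact ⟨(0, 0), fun h' => absurd h' h⟩
  choose f hf using hex
  have hfm : ∀ d, d < μ.card → ((f d).1, (f d).2) ∈ μ := by
    intro d hd; rw [Prod.mk.eta]; exact (hf d hd).1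
  have hfv : ∀ d, d < μ.card → T (f d).1 (f d).2 = d := fun d hd => (hf d hd).2
  -- quasi-Yamanouchi property and contiguity of values of Q
  have hqy : ∀ w, 0 < w → (∃ i j : ℕ, (i, j) ∈ μ ∧ Q i j = w) →
      ∃ i j i' j' : ℕ, (i, j) ∈ μ ∧ (i', j') ∈ μ ∧ Q i j = w ∧ Q i' j' = w - 1 ∧ j ≤ j' :=
    fun w hw hx => qy_of_nostep hnostep hw hx
  have happ : ∀ w, w < k → ∃ i j : ℕ, (i, j) ∈ μ ∧ Q i j = w := by
    have hstep : ∀ d, ∃ i j : ℕ, (i, j) ∈ μ ∧ Q i j = k - 1 - d := by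
      intro d
      induction d with
      | zero => exact ⟨pi, pj, hpm, by simpa using hpv⟩
      | succ d ih =>
        obtain ⟨i, j, hijm, hijv⟩ := ih
        by_cases h0 : k - 1 - d = 0
        · exact ⟨i, j, hijm, by omega⟩
        · obtain ⟨a, b, a', b', h1, h2, h3, h4, h5⟩ :=
            hqy (k - 1 - d) (by omega) ⟨i, j, hijm, hijv⟩
          exact ⟨a', b', h2, by omega⟩
    intro w hw
    obtain ⟨i, j, h1, h2⟩ := hstep (k - 1 - w)
    exact ⟨i, j, h1, by omega⟩
  -- main facts about descents
  have hDes : ∀ d, d ∈ Des μ T → d < μ.card ∧ 1 ≤ Q (f d).1 (f d).2 ∧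
      Q (f d).1 (f d).2 < k ∧ Q (f (d - 1)).1 (f (d - 1)).2 < Q (f d).1 (f d).2 := by
    intro d hd
    obtain ⟨hd1, hd2, i, j, i', j', hij, hij', hTd, hTd1, hjj⟩ := hd
    have hTc := syt_lt_card hT i j hij
    have hdn : d < μ.card := by omega
    have hdn1 : d - 1 < μ.card := by omega
    have e1 : f d = (i, j) := syt_inj hT (hfm d hdn) hij (by rw [hfv d hdn, hTd])
    have e2 : f (d - 1) = (i', j') := syt_inj hT (hfm _ hdn1) hij' (by rw [hfv _ hdn1, hTd1])
    have hlt : Q i' j' < Q i j := by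
      rcases QT i' j' i j hij' hij (by rw [hTd, hTd1]; omega) with h | ⟨-, h⟩
      · exact h
      · omega
    rw [e1, e2]
    exact ⟨hdn, lt_of_le_of_lt (Nat.zero_le _) hlt, hQlt i j hij, hlt⟩
  have hmono : ∀ d d', d ∈ Des μ T → d' ∈ Des μ T → d < d' →
      Q (f d).1 (f d).2 < Q (f d').1 (f d').2 := by
    intro d d' hd hd' hlt
    obtain ⟨hdn, -, -, -⟩ := hDes d hd
    obtain ⟨hdn', -, -, hq'⟩ := hDes d' hd'
    have hdn1' : d' - 1 < μ.card := lt_of_le_of_lt (Nat.sub_le _ _) hdn'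
    have h1 : T (f d).1 (f d).2 ≤ T (f (d' - 1)).1 (f (d' - 1)).2 := by
      rw [hfv d hdn, hfv _ hdn1']; omega
    have h2 : Q (f d).1 (f d).2 ≤ Q (f (d' - 1)).1 (f (d' - 1)).2 := by
      rcases lt_or_eq_of_le h1 with h | h
      · exact QT2 _ _ _ _ (hfm d hdn) (hfm _ hdn1') h
      · have e := syt_inj hT (hfm d hdn) (hfm _ hdn1') h
        rw [Prod.mk.injEq] at e
        rw [e.1, e.2]
    omega
  -- surjectivity
  have hsurj : ∀ v, 1 ≤ v → v ≤ k - 1 → ∃ d ∈ Des μ T, Q (f d).1 (f d).2 = v := by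
    intro v hv1 hv2
    obtain ⟨iv, jv, hm1, hval1⟩ := happ v (by omega)
    obtain ⟨iw, jw, hm2, hval2⟩ := happ (v - 1) (by omega)
    set s : Finset (ℕ × ℕ) := μ.cells.filter (fun p => Q p.1 p.2 = v) with hs
    set s' : Finset (ℕ × ℕ) := μ.cells.filter (fun p => Q p.1 p.2 = v - 1) with hs'
    have hsne : s.Nonempty :=
      ⟨(iv, jv), Finset.mem_filter.2 ⟨(mem_cells _).2 hm1, hval1⟩⟩
    have hs'ne : s'.Nonempty :=
      ⟨(iw, jw), Finset.mem_filter.2 ⟨(mem_cells _).2 hm2, hval2⟩⟩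
    obtain ⟨c, hcs, hcmin⟩ := Finset.exists_min_image s (fun p => T p.1 p.2) hsne
    obtain ⟨c', hcs', hcmax⟩ := Finset.exists_max_image s' (fun p => T p.1 p.2) hs'ne
    have hcm : (c.1, c.2) ∈ μ := by
      rw [Prod.mk.eta]; exact (mem_cells _).1 (Finset.mem_filter.mp hcs).1
    have hcv : Q c.1 c.2 = v := (Finset.mem_filter.mp hcs).2
    have hc'm : (c'.1, c'.2) ∈ μ := by
      rw [Prod.mk.eta]; exact (mem_cells _).1 (Finset.mem_filter.mp hcs').1
    have hc'v : Q c'.1 c'.2 = v - 1 := (Finset.mem_filter.mp hcs').2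
    -- QY witnesses at v
    obtain ⟨a, b, a', b', ham, ha'm, hav, ha'v, hab⟩ :=
      hqy v (by omega) ⟨iv, jv, hm1, hval1⟩
    have h1 : c.2 ≤ b := by
      rcases Nat.lt_or_ge (T c.1 c.2) (T a b) with h | h
      · exact le_of_lt (colQ c.1 c.2 a b hcm ham (by rw [hcv, hav]) h)
      · have hmin := hcmin (a, b) (Finset.mem_filter.2 ⟨(mem_cells _).2 ham, hav⟩)
        have heqT : T c.1 c.2 = T a b := le_antisymm hmin h
        have e := syt_inj hT hcm ham heqT
        rw [Prod.mk.injEq] at e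
        omega
    have h2 : b' ≤ c'.2 := by
      rcases Nat.lt_or_ge (T a' b') (T c'.1 c'.2) with h | h
      · exact le_of_lt (colQ a' b' c'.1 c'.2 ha'm hc'm (by rw [hc'v, ha'v]) h)
      · have hmax := hcmax (a', b') (Finset.mem_filter.2 ⟨(mem_cells _).2 ha'm, ha'v⟩)
        have heqT : T a' b' = T c'.1 c'.2 := le_antisymm hmax h
        have e := syt_inj hT ha'm hc'm heqT
        rw [Prod.mk.injEq] at e
        omega
    have hcols : c.2 ≤ c'.2 := le_trans h1 (le_trans hab h2)
    have hTlt : T c'.1 c'.2 < T c.1 c.2 :=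
      TQ c'.1 c'.2 c.1 c.2 hc'm hcm (by rw [hcv, hc'v]; omega)
    have hTc := syt_lt_card hT c.1 c.2 hcm
    have hecard : T c'.1 c'.2 + 1 < μ.card := by omega
    have hem := hfm _ hecard
    have hev := hfv _ hecard
    -- the cell with T-value (T c' + 1) is c itself
    have hece : f (T c'.1 c'.2 + 1) = c := by
      by_contra hne
      have hTne : T (f (T c'.1 c'.2 + 1)).1 (f (T c'.1 c'.2 + 1)).2 ≠ T c.1 c.2 := by
        intro h
        have e := syt_inj hT hem hcm h
        rw [Prod.mk.injEq] at e
        exact hne (Prod.ext e.1 e.2)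
      have hTelt : T (f (T c'.1 c'.2 + 1)).1 (f (T c'.1 c'.2 + 1)).2 < T c.1 c.2 := by omega
      have hQge : v - 1 ≤ Q (f (T c'.1 c'.2 + 1)).1 (f (T c'.1 c'.2 + 1)).2 := by
        have := QT2 c'.1 c'.2 _ _ hc'm hem (by omega)
        omega
      have hQle : Q (f (T c'.1 c'.2 + 1)).1 (f (T c'.1 c'.2 + 1)).2 ≤ v := by
        have := QT2 _ _ c.1 c.2 hem hcm hTelt
        omega
      have : Q (f (T c'.1 c'.2 + 1)).1 (f (T c'.1 c'.2 + 1)).2 = v - 1 ∨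
          Q (f (T c'.1 c'.2 + 1)).1 (f (T c'.1 c'.2 + 1)).2 = v := by omega
      rcases this with h | h
      · have hmem' : f (T c'.1 c'.2 + 1) ∈ s' :=
          Finset.mem_filter.2 ⟨(mem_cells _).2 (by rwa [Prod.mk.eta] at hem), h⟩
        have := hcmax _ hmem'
        omega
      · have hmem' : f (T c'.1 c'.2 + 1) ∈ s :=
          Finset.mem_filter.2 ⟨(mem_cells _).2 (by rwa [Prod.mk.eta] at hem), h⟩
        have := hcmin _ hmem'
        omega
    have hTcc : T c.1 c.2 = T c'.1 c'.2 + 1 := by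
      rw [← hev, hece]
    refine ⟨T c.1 c.2, ⟨by omega, by omega, c.1, c.2, c'.1, c'.2, hcm, hc'm, rfl, by omega,
      hcols⟩, ?_⟩
    have hfc : f (T c.1 c.2) = c := by rw [hTcc, hece]
    rw [hfc]
    exact hcv
  -- assemble the bijection
  have hbij : Set.BijOn (fun d => Q (f d).1 (f d).2) (Des μ T) (Set.Icc 1 (k - 1)) := by
    refine ⟨?_, ?_, ?_⟩
    · intro d hd
      show Q (f d).1 (f d).2 ∈ Set.Icc 1 (k - 1)
      obtain ⟨-, h1, h2, -⟩ := hDes d hd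
      exact Set.mem_Icc.2 ⟨h1, by omega⟩
    · intro a ha b hb hab
      dsimp only at hab
      rcases lt_trichotomy a b with h | h | h
      · have := hmono a b ha hb h; omega
      · exact h
      · have := hmono b a hb ha h; omega
    · intro v hv
      obtain ⟨hv1, hv2⟩ := Set.mem_Icc.1 hv
      obtain ⟨d, hd, hval⟩ := hsurj v hv1 hv2
      exact ⟨d, hd, hval⟩
  have h1 : (Des μ T).ncard = (Set.Icc 1 (k - 1)).ncard := by
    rw [← hbij.image_eq, Set.ncard_image_of_injOn hbij.injOn]
  rw [h1, ← Finset.coe_Icc, Set.ncard_coe_finset, Nat.card_Icc]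
  omega
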